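/- arXiv:1602.02953 — 3 statements merged into one kernel-verified Lean document; each statement's English description precedes it below -/
import Mathlib

section
/- Let $H\in(3/4,1)$, let $n>1$ be an integer, let $\mu\in\mathbb{R}$, $\sigma>0$, $\alpha>0$, and set $\Sigma_0=\frac1n I_n+\alpha^2 C_n$ and $\Sigma_1=\frac1n I_n+\frac{\mu^2\alpha^2}{\sigma^2 n^2}\,\mathbf{1}_{n\times n}$. Then $\operatorname{tr}(\Sigma_1^{-1}\Sigma_0)=n+\alpha^2 n^{2-2H}-\frac{\mu^2\alpha^2}{\mu^2\alpha^2+\sigma^2}\,(1+\alpha^2)$. -/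
open MeasureTheory Matrix Filter Real

/-- The Gaussian measure on `ℝⁿ` with mean `m` and (invertible) covariance matrix `S`,
defined via its density with respect to Lebesgue measure. -/
noncomputable def gaussianMeasure (n : ℕ) (m : Fin n → ℝ) (S : Matrix (Fin n) (Fin n) ℝ) :
    Measure (Fin n → ℝ) :=
  volume.withDensity fun x => ENNReal.ofReal
    ((Real.sqrt ((2 * Real.pi) ^ n * S.det))⁻¹ *
      Real.exp (-(1 / 2 : ℝ) * ((x - m) ⬝ᵥ S⁻¹ *ᵥ (x - m))))

/-- The relative entropy (Kullback–Leibler divergence) `H(μ | ν) = ∫ log (dμ/dν) dμ`. -/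
noncomputable def relativeEntropy {Ω : Type*} [MeasurableSpace Ω] (μ ν : Measure Ω) : ℝ :=
  ∫ x, llr μ ν x ∂μ

/-- The covariance matrix `C_n` of the increments over the uniform partition of `[0,1]`
of a fractional Brownian motion with Hurst parameter `H`. -/
noncomputable def fbmCov (H : ℝ) (n : ℕ) : Matrix (Fin n) (Fin n) ℝ :=
  Matrix.of fun i j =>
    (2 * (n : ℝ) ^ (2 * H))⁻¹ *
      (|((i : ℕ) : ℝ) - ((j : ℕ) : ℝ) + 1| ^ (2 * H)
        + |((i : ℕ) : ℝ) - ((j : ℕ) : ℝ) - 1| ^ (2 * H)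
        - 2 * |((i : ℕ) : ℝ) - ((j : ℕ) : ℝ)| ^ (2 * H))

/-- The `n × n` all-ones matrix `1_{n×n}`. -/
def onesMatrix (n : ℕ) : Matrix (Fin n) (Fin n) ℝ := Matrix.of fun _ _ => 1

/-- The all-ones vector `1_n ∈ ℝⁿ`. -/
def onesVec (n : ℕ) : Fin n → ℝ := fun _ => 1

open Finset in
lemma sum_telescope_g (H : ℝ) (hH : 0 < H) (n : ℕ) :
    ∑ i ∈ range n, ∑ j ∈ range n,
      (|(i:ℝ) - j + 1| ^ (2*H) + |(i:ℝ) - j - 1| ^ (2*H) - 2 * |(i:ℝ) - j| ^ (2*H))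
    = 2 * (n:ℝ) ^ (2*H) := by
  set g : ℝ → ℝ := fun x => |x| ^ (2*H) with hgdef
  have hgeven : ∀ x : ℝ, g (-x) = g x := fun x => by simp [hgdef, abs_neg]
  have hg0 : g 0 = 0 := by
    simp only [hgdef, abs_zero]
    exact Real.zero_rpow (by linarith)
  have hgn : g (n:ℝ) = (n:ℝ) ^ (2*H) := by
    have : |(n:ℝ)| = n := abs_of_nonneg (by positivity)
    simp [hgdef, this]
  have hreflect : ∀ F : ℝ → ℝ, ∑ j ∈ range n, F ((n:ℝ) - j) = ∑ j ∈ range n, F ((j:ℝ) + 1) := by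
    intro F
    rw [← Finset.sum_range_reflect]
    refine Finset.sum_congr rfl fun j hj => ?_
    have hj' : j < n := Finset.mem_range.mp hj
    congr 1
    have h1 : (n - 1 - j : ℕ) = n - (j+1) := by omega
    rw [h1, Nat.cast_sub (by omega)]
    push_cast
    ring
  have hA : ∀ j : ℕ, ∑ i ∈ range n, (g ((i:ℝ) - j + 1) - g ((i:ℝ) - j))
      = g ((n:ℝ) - j) - g (-(j:ℝ)) := by
    intro j
    have h := Finset.sum_range_sub (fun i : ℕ => g ((i:ℝ) - j)) n
    simp only [Nat.cast_add, Nat.cast_one, Nat.cast_zero, zero_sub] at h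
    rw [← h]
    refine Finset.sum_congr rfl fun i _ => ?_
    have e : (i:ℝ) - j + 1 = (i:ℝ) + 1 - j := by ring
    rw [e]
  have hB : ∀ i : ℕ, ∑ j ∈ range n, (g ((i:ℝ) - j) - g ((i:ℝ) - j - 1))
      = g ((i:ℝ)) - g ((i:ℝ) - n) := by
    intro i
    have h := Finset.sum_range_sub (fun j : ℕ => -g ((i:ℝ) - j)) n
    simp only [Nat.cast_add, Nat.cast_one, Nat.cast_zero, sub_zero] at h
    rw [show g ((i:ℝ)) - g ((i:ℝ) - n) = -g ((i:ℝ) - n) - -g ((i:ℝ)) by ring, ← h]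
    refine Finset.sum_congr rfl fun j _ => ?_
    have e : (i:ℝ) - (j + 1) = (i:ℝ) - j - 1 := by ring
    rw [e]
    ring
  have hsplit : ∀ i j : ℕ,
      (|(i:ℝ) - j + 1| ^ (2*H) + |(i:ℝ) - j - 1| ^ (2*H) - 2 * |(i:ℝ) - j| ^ (2*H))
      = (g ((i:ℝ) - j + 1) - g ((i:ℝ) - j)) - (g ((i:ℝ) - j) - g ((i:ℝ) - j - 1)) := by
    intro i j; simp only [hgdef]; ring
  calc ∑ i ∈ range n, ∑ j ∈ range n,
        (|(i:ℝ) - j + 1| ^ (2*H) + |(i:ℝ) - j - 1| ^ (2*H) - 2 * |(i:ℝ) - j| ^ (2*H))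
      = (∑ i ∈ range n, ∑ j ∈ range n, (g ((i:ℝ) - j + 1) - g ((i:ℝ) - j)))
        - ∑ i ∈ range n, ∑ j ∈ range n, (g ((i:ℝ) - j) - g ((i:ℝ) - j - 1)) := by
        rw [← Finset.sum_sub_distrib]
        refine Finset.sum_congr rfl fun i _ => ?_
        rw [← Finset.sum_sub_distrib]
        exact Finset.sum_congr rfl fun j _ => hsplit i j
    _ = (∑ j ∈ range n, (g ((n:ℝ) - j) - g (-(j:ℝ))))
        - ∑ i ∈ range n, (g ((i:ℝ)) - g ((i:ℝ) - n)) := by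
        rw [Finset.sum_comm (s := range n) (t := range n)]
        congr 1
        · exact Finset.sum_congr rfl fun j _ => hA j
        · exact Finset.sum_congr rfl fun i _ => hB i
    _ = 2 * (n:ℝ) ^ (2*H) := by
        have e1 : ∑ j ∈ range n, (g ((n:ℝ) - j) - g (-(j:ℝ)))
            = ∑ j ∈ range n, (g ((j:ℝ)+1) - g (j:ℝ)) := by
          rw [Finset.sum_sub_distrib, Finset.sum_sub_distrib, hreflect (fun x => g x)]
          congr 1
          exact Finset.sum_congr rfl fun j _ => hgeven _
        have e2 : ∑ i ∈ range n, (g ((i:ℝ)) - g ((i:ℝ) - n))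
            = ∑ i ∈ range n, (g (i:ℝ) - g ((i:ℝ)+1)) := by
          rw [Finset.sum_sub_distrib, Finset.sum_sub_distrib]
          congr 1
          rw [← hreflect (fun x => g x)]
          refine Finset.sum_congr rfl fun i _ => ?_
          rw [← hgeven ((i:ℝ) - n)]
          congr 1; ring
        have tg : ∑ j ∈ range n, (g ((j:ℝ)+1) - g (j:ℝ)) = g (n:ℝ) - g 0 := by
          have h := Finset.sum_range_sub (fun j : ℕ => g (j:ℝ)) n
          simp only [Nat.cast_add, Nat.cast_one, Nat.cast_zero] at h
          rw [← h]
        rw [e1, e2, tg]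
        have : ∑ i ∈ range n, (g (i:ℝ) - g ((i:ℝ)+1)) = -(g (n:ℝ) - g 0) := by
          rw [← tg, ← Finset.sum_neg_distrib]
          exact Finset.sum_congr rfl fun i _ => by ring
        rw [this, hg0, hgn]
        ring

lemma ones_mul_ones (n : ℕ) : onesMatrix n * onesMatrix n = (n : ℝ) • onesMatrix n := by
  ext i j
  simp [onesMatrix, Matrix.mul_apply]

lemma trace_ones (n : ℕ) : Matrix.trace (onesMatrix n) = (n : ℝ) := by
  simp [onesMatrix, Matrix.trace, Matrix.diag]

lemma trace_fbmCov (H : ℝ) (hH : 0 < H) (n : ℕ) :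
    Matrix.trace (fbmCov H n) = (n : ℝ) * ((n : ℝ) ^ (2 * H))⁻¹ := by
  have hd : ∀ i : Fin n, fbmCov H n i i = ((n : ℝ) ^ (2 * H))⁻¹ := by
    intro i
    simp only [fbmCov, Matrix.of_apply, sub_self]
    rw [show (0:ℝ) + 1 = 1 by ring, show (0:ℝ) - 1 = -1 by ring]
    rw [abs_one, abs_neg, abs_one, abs_zero, Real.one_rpow,
      Real.zero_rpow (by linarith)]
    rw [mul_inv]
    ring
  simp only [Matrix.trace, Matrix.diag]
  rw [Finset.sum_congr rfl fun i _ => hd i]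
  simp [mul_comm]

lemma trace_ones_mul_fbmCov (H : ℝ) (hH : 0 < H) (n : ℕ) (hn : 0 < n) :
    Matrix.trace (onesMatrix n * fbmCov H n) = 1 := by
  have hne : (2 * (n:ℝ) ^ (2*H)) ≠ 0 := by
    have : (0:ℝ) < (n:ℝ) ^ (2*H) := Real.rpow_pos_of_pos (by exact_mod_cast hn) _
    positivity
  have key := sum_telescope_g H hH n
  simp only [Matrix.trace, Matrix.diag, Matrix.mul_apply, onesMatrix, fbmCov,
    Matrix.of_apply, one_mul]
  simp_rw [← Finset.mul_sum]
  rw [Finset.sum_comm]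
  have conv1 : ∀ l : Fin n, ∑ i : Fin n,
      (|((l:ℕ):ℝ) - ((i:ℕ):ℝ) + 1| ^ (2*H) + |((l:ℕ):ℝ) - ((i:ℕ):ℝ) - 1| ^ (2*H)
        - 2 * |((l:ℕ):ℝ) - ((i:ℕ):ℝ)| ^ (2*H))
      = ∑ i ∈ Finset.range n,
      (|((l:ℕ):ℝ) - (i:ℝ) + 1| ^ (2*H) + |((l:ℕ):ℝ) - (i:ℝ) - 1| ^ (2*H)
        - 2 * |((l:ℕ):ℝ) - (i:ℝ)| ^ (2*H)) := fun l =>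
    Fin.sum_univ_eq_sum_range (fun i : ℕ =>
      (|((l:ℕ):ℝ) - (i:ℝ) + 1| ^ (2*H) + |((l:ℕ):ℝ) - (i:ℝ) - 1| ^ (2*H)
        - 2 * |((l:ℕ):ℝ) - (i:ℝ)| ^ (2*H))) n
  rw [Finset.sum_congr rfl fun l _ => conv1 l]
  rw [Fin.sum_univ_eq_sum_range (fun l : ℕ => ∑ i ∈ Finset.range n,
      (|(l:ℝ) - (i:ℝ) + 1| ^ (2*H) + |(l:ℝ) - (i:ℝ) - 1| ^ (2*H)
        - 2 * |(l:ℝ) - (i:ℝ)| ^ (2*H))) n]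
  rw [key]
  field_simp


/-- `tr(Σ₁⁻¹ Σ₀) = n + α² n^{2-2H} - (μ²α²/(μ²α² + σ²))(1 + α²)`. -/
theorem statement8 (H : ℝ) (hH : H ∈ Set.Ioo (3 / 4 : ℝ) 1) (n : ℕ) (hn : 1 < n)
    (μ σ α : ℝ) (hσ : 0 < σ) (hα : 0 < α)
    (S0 S1 : Matrix (Fin n) (Fin n) ℝ)
    (hS0 : S0 = ((n : ℝ)⁻¹) • (1 : Matrix (Fin n) (Fin n) ℝ) + (α ^ 2) • fbmCov H n)
    (hS1 : S1 = ((n : ℝ)⁻¹) • (1 : Matrix (Fin n) (Fin n) ℝ)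
        + (μ ^ 2 * α ^ 2 / (σ ^ 2 * (n : ℝ) ^ 2)) • onesMatrix n) :
    Matrix.trace (S1⁻¹ * S0)
      = (n : ℝ) + α ^ 2 * (n : ℝ) ^ ((2 : ℝ) - 2 * H)
        - μ ^ 2 * α ^ 2 / (μ ^ 2 * α ^ 2 + σ ^ 2) * (1 + α ^ 2) := by
  have hH0 : 0 < H := by linarith [hH.1]
  have hn0 : (0:ℝ) < n := by exact_mod_cast Nat.zero_lt_of_lt hn
  have hnne : (n:ℝ) ≠ 0 := ne_of_gt hn0
  have hden : (0:ℝ) < μ ^ 2 * α ^ 2 + σ ^ 2 := by positivity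
  set c : ℝ := μ ^ 2 * α ^ 2 / (σ ^ 2 * (n : ℝ) ^ 2) with hc
  set k : ℝ := μ ^ 2 * α ^ 2 / (μ ^ 2 * α ^ 2 + σ ^ 2) with hk
  set M : Matrix (Fin n) (Fin n) ℝ :=
    (n:ℝ) • (1 : Matrix (Fin n) (Fin n) ℝ) - k • onesMatrix n with hM
  have hco : c * (n:ℝ) - c * (k * (n:ℝ)) = (n:ℝ)⁻¹ * k := by
    rw [hc, hk]
    field_simp
    ring
  have hco2 : (n:ℝ) * c = k * (n:ℝ)⁻¹ + k * (c * (n:ℝ)) := by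
    rw [hc, hk]
    field_simp
    ring
  have hinv : S1⁻¹ = M := by
    apply Matrix.inv_eq_right_inv
    rw [hS1, hM]
    simp only [Matrix.add_mul, Matrix.mul_sub, Matrix.smul_mul, Matrix.mul_smul,
      Matrix.one_mul, Matrix.mul_one, ones_mul_ones, smul_smul]
    rw [smul_add, smul_add, smul_smul, smul_smul, smul_smul, smul_smul,
      mul_inv_cancel₀ hnne, one_smul]
    rw [← add_smul, ← hco2]
    rw [add_sub_cancel_right]
  rw [hinv, hS0, hM]
  simp only [Matrix.sub_mul, Matrix.smul_mul, Matrix.one_mul, Matrix.mul_add,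
    Matrix.mul_smul, Matrix.mul_one, Matrix.trace_sub, Matrix.trace_add,
    Matrix.trace_smul, smul_eq_mul]
  rw [trace_ones_mul_fbmCov H hH0 n (by omega), trace_fbmCov H hH0 n,
    Matrix.trace_one, Fintype.card_fin, trace_ones]
  have h2 : (n:ℝ) ^ ((2:ℝ)) = (n:ℝ) * (n:ℝ) := by
    rw [show (2:ℝ) = ((2:ℕ):ℝ) by norm_num, Real.rpow_natCast]
    ring
  have hpow : (n:ℝ) ^ ((2:ℝ) - 2 * H) = (n:ℝ) * ((n:ℝ) * ((n:ℝ) ^ (2 * H))⁻¹) := by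
    rw [Real.rpow_sub hn0, h2, div_eq_mul_inv]
    ring
  rw [hpow]
  field_simp
  ring
end

section
/- Let $\sigma>0$ and let $Z$ and $B$ be independent standard Gaussian random variables on a probability space $(\Omega,\mathcal{F},P)$. Define $h(x)=\frac{1}{\sqrt{2\pi}\,\sigma x}\exp\left(-\frac{(\ln x)^2}{2\sigma^2}\right)$ for $x>0$ (the density of the law of $e^{\sigma Z}$) and $g(x)=e^{-x}/h(x)$. Then: (1) $g(e^{\sigma Z})>0$ almost surely and $E_P\left[g(e^{\sigma Z})\right]=1$, so $d\tilde P = g(e^{\sigma Z})\,dP$ defines a probability measure equivalent to $P$; and (2) for every $\alpha>0$, $E_{\tilde P}\left[\exp\left(\sigma Z+\frac{\sigma}{\alpha}B-\frac{\sigma^2}{2\alpha^2}\right)\right]=1$. -/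
open MeasureTheory ProbabilityTheory Real Filter Topology Set

lemma aux_integral_real {F f : ℝ → ℝ} (hd : ∀ x, HasDerivAt F (f x) x)
    (hpos : ∀ x, 0 ≤ f x) (hIic : IntegrableOn f (Iic 0))
    {a b : ℝ} (hbot : Tendsto F atBot (𝓝 a)) (htop : Tendsto F atTop (𝓝 b)) :
    ∫ x, f x = b - a := by
  have hIoi : IntegrableOn f (Ioi 0) :=
    integrableOn_Ioi_deriv_of_nonneg' (fun x _ => hd x) (fun x _ => hpos x) htop
  have h1 : ∫ x in Iic (0:ℝ), f x = F 0 - a :=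
    integral_Iic_of_hasDerivAt_of_tendsto (hd 0).continuousAt.continuousWithinAt
      (fun x _ => hd x) hIic hbot
  have h2 : ∫ x in Ioi (0:ℝ), f x = b - F 0 :=
    integral_Ioi_of_hasDerivAt_of_tendsto (hd 0).continuousAt.continuousWithinAt
      (fun x _ => hd x) hIoi htop
  rw [← intervalIntegral.integral_Iic_add_Ioi (b := (0:ℝ)) hIic hIoi, h1, h2]
  ring

lemma aux_exp_Iic {c : ℝ} (hc : 0 < c) :
    IntegrableOn (fun z => Real.exp (c * z)) (Iic (0:ℝ)) := by
  have h1 : Integrable ((Iic (0:ℝ)).indicator Real.exp) :=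
    (integrable_indicator_iff measurableSet_Iic).2 (integrableOn_exp_Iic 0)
  have h2 : Integrable (fun z => ((Iic (0:ℝ)).indicator Real.exp) (c * z)) :=
    (integrable_comp_mul_left_iff _ hc.ne').2 h1
  have h3 : (fun z => ((Iic (0:ℝ)).indicator Real.exp) (c * z))
      = (Iic (0:ℝ)).indicator (fun z => Real.exp (c * z)) := by
    funext z
    by_cases hz : z ≤ 0
    · rw [Set.indicator_of_mem (by simpa using mul_nonpos_of_nonneg_of_nonpos hc.le hz),
        Set.indicator_of_mem (by simpa using hz)]
    · push_neg at hz
      rw [Set.indicator_of_notMem (by simpa using mul_pos hc hz),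
        Set.indicator_of_notMem (by simpa using hz)]
  rw [h3] at h2
  exact (integrable_indicator_iff measurableSet_Iic).1 h2

lemma aux_gaussian_integral (f : ℝ → ℝ) :
    ∫ x, f x ∂(gaussianReal 0 1) = ∫ x, gaussianPDFReal 0 1 x * f x := by
  rw [gaussianReal_of_var_ne_zero _ one_ne_zero,
    show gaussianPDF 0 1 = fun x => ((gaussianPDFReal 0 1 x).toNNReal : ENNReal) from rfl,
    integral_withDensity_eq_integral_smul
      (f := fun x => (gaussianPDFReal 0 1 x).toNNReal)
      ((measurable_gaussianPDFReal 0 1).real_toNNReal) f]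
  congr 1
  funext x
  rw [NNReal.smul_def, Real.coe_toNNReal _ (gaussianPDFReal_nonneg 0 1 x), smul_eq_mul]

/-- the measure `d P̃ = g(e^{σZ}) dP` is a probability measure equivalent
to `P`, and it is a martingale measure for the two-period mixed fractional Black–Scholes
asset `S₁ = exp(σZ + (σ/α)B - σ²/(2α²))`, for every `α > 0`. -/
theorem statement15 {Ω : Type*} [MeasurableSpace Ω] (P : Measure Ω) [IsProbabilityMeasure P]
    (σ : ℝ) (hσ : 0 < σ) (Z B : Ω → ℝ) (hZ : Measurable Z) (hB : Measurable B)
    (hindep : IndepFun Z B P)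
    (hZlaw : P.map Z = gaussianReal 0 1) (hBlaw : P.map B = gaussianReal 0 1)
    (h g : ℝ → ℝ)
    (hh : ∀ x, 0 < x →
      h x = (Real.sqrt (2 * Real.pi) * σ * x)⁻¹ * Real.exp (-(Real.log x) ^ 2 / (2 * σ ^ 2)))
    (hg : ∀ x, 0 < x → g x = Real.exp (-x) / h x) :
    (∀ᵐ ω ∂P, 0 < g (Real.exp (σ * Z ω))) ∧
    (∫ ω, g (Real.exp (σ * Z ω)) ∂P = 1) ∧
    (∀ α : ℝ, 0 < α →
      ∫ ω, Real.exp (σ * Z ω + σ / α * B ω - σ ^ 2 / (2 * α ^ 2))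
        ∂(P.withDensity fun ω => ENNReal.ofReal (g (Real.exp (σ * Z ω)))) = 1) := by
  have sqrtpos : 0 < Real.sqrt (2 * Real.pi) := Real.sqrt_pos.2 (by positivity)
  set φ : ℝ → ℝ := fun z => Real.sqrt (2 * Real.pi) * σ * Real.exp (σ * z)
      * Real.exp (z ^ 2 / 2) * Real.exp (-Real.exp (σ * z)) with hφdef
  have hφc : Continuous φ := by fun_prop
  have hφpos : ∀ z, 0 < φ z := fun z => by positivity
  have hG : ∀ z : ℝ, g (Real.exp (σ * z)) = φ z := by
    intro z
    rw [hg _ (exp_pos _), hh _ (exp_pos _), Real.log_exp]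
    have h2 : -(σ * z) ^ 2 / (2 * σ ^ 2) = -(z ^ 2 / 2) := by
      field_simp
    rw [h2, hφdef]
    rw [Real.exp_neg (z ^ 2 / 2)]
    field_simp
  -- derivative facts
  have hmul : ∀ z : ℝ, HasDerivAt (fun z : ℝ => Real.exp (σ * z)) (Real.exp (σ * z) * σ) z := by
    intro z
    exact (Real.hasDerivAt_exp _).comp z (by simpa using (hasDerivAt_id z).const_mul σ)
  -- limits of exp (σ z)
  have hlimB : Tendsto (fun z => Real.exp (σ * z)) atBot (𝓝 0) :=
    Real.tendsto_exp_atBot.comp (tendsto_id.const_mul_atBot hσ)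
  have hlimT : Tendsto (fun z => Real.exp (σ * z)) atTop atTop :=
    Real.tendsto_exp_atTop.comp (tendsto_id.const_mul_atTop hσ)
  -- first integral : ∫ σ e^{σz} e^{-e^{σz}} = 1
  have hd1 : ∀ z, HasDerivAt (fun z => -Real.exp (-Real.exp (σ * z)))
      (σ * Real.exp (σ * z) * Real.exp (-Real.exp (σ * z))) z := by
    intro z
    have : HasDerivAt (fun z => -Real.exp (-Real.exp (σ * z)))
        (-(Real.exp (-Real.exp (σ * z)) * -(Real.exp (σ * z) * σ))) z := ((hmul z).neg.exp).neg
    convert this using 1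
    ring
  have hbot1 : Tendsto (fun z => -Real.exp (-Real.exp (σ * z))) atBot (𝓝 (-1)) := by
    have hc : Continuous (fun u : ℝ => -Real.exp (-u)) := by fun_prop
    have := (hc.tendsto 0).comp hlimB
    simpa [Function.comp_def] using this
  have htop1 : Tendsto (fun z => -Real.exp (-Real.exp (σ * z))) atTop (𝓝 0) := by
    have h0 : Tendsto (fun u : ℝ => -Real.exp (-u)) atTop (𝓝 0) := by
      have := (Real.tendsto_exp_atBot.comp tendsto_neg_atTop_atBot).neg
      simpa using this
    exact h0.comp hlimT
  have hIic1 : IntegrableOn (fun z => σ * Real.exp (σ * z) * Real.exp (-Real.exp (σ * z)))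
      (Iic (0:ℝ)) := by
    refine Integrable.mono ((aux_exp_Iic hσ).const_mul σ)
      (Continuous.aestronglyMeasurable (by fun_prop)) (ae_of_all _ fun z => ?_)
    rw [Real.norm_eq_abs, Real.norm_eq_abs, abs_of_nonneg (by positivity),
      abs_of_nonneg (by positivity)]
    calc σ * Real.exp (σ * z) * Real.exp (-Real.exp (σ * z))
        ≤ σ * Real.exp (σ * z) * 1 := by
          gcongr
          exact Real.exp_le_one_iff.2 (neg_nonpos.2 (Real.exp_pos _).le)
      _ = σ * Real.exp (σ * z) := mul_one _
  have hI1 : ∫ z, σ * Real.exp (σ * z) * Real.exp (-Real.exp (σ * z)) = 1 := by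
    have := aux_integral_real hd1 (fun z => by positivity) hIic1 hbot1 htop1
    rw [this]; norm_num
  -- second integral : ∫ σ e^{σz} e^{σz} e^{-e^{σz}} = 1
  have hd2 : ∀ z, HasDerivAt (fun z => -(Real.exp (σ * z) + 1) * Real.exp (-Real.exp (σ * z)))
      (σ * Real.exp (σ * z) * Real.exp (σ * z) * Real.exp (-Real.exp (σ * z))) z := by
    intro z
    have hA : HasDerivAt (fun z => -(Real.exp (σ * z) + 1)) (-(Real.exp (σ * z) * σ)) z :=
      ((hmul z).add_const 1).neg
    have hB' : HasDerivAt (fun z => Real.exp (-Real.exp (σ * z)))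
        (Real.exp (-Real.exp (σ * z)) * -(Real.exp (σ * z) * σ)) z := (hmul z).neg.exp
    have : HasDerivAt (fun z => -(Real.exp (σ * z) + 1) * Real.exp (-Real.exp (σ * z)))
        (-(Real.exp (σ * z) * σ) * Real.exp (-Real.exp (σ * z))
          + -(Real.exp (σ * z) + 1) * (Real.exp (-Real.exp (σ * z)) * -(Real.exp (σ * z) * σ))) z :=
      hA.mul hB'
    convert this using 1
    ring
  have htail2 : Tendsto (fun u : ℝ => -(u + 1) * Real.exp (-u)) atTop (𝓝 0) := by
    have h1 := Real.tendsto_pow_mul_exp_neg_atTop_nhds_zero 1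
    have h2 : Tendsto (fun x : ℝ => Real.exp (-x)) atTop (𝓝 0) :=
      Real.tendsto_exp_atBot.comp tendsto_neg_atTop_atBot
    have h3 := (h1.add h2).neg
    simp only [neg_zero, add_zero] at h3
    refine h3.congr fun x => by ring
  have hbot2 : Tendsto (fun z => -(Real.exp (σ * z) + 1) * Real.exp (-Real.exp (σ * z)))
      atBot (𝓝 (-1)) := by
    have hc : Continuous (fun u : ℝ => -(u + 1) * Real.exp (-u)) := by fun_prop
    have := (hc.tendsto 0).comp hlimB
    simpa [Function.comp_def] using this
  have htop2 : Tendsto (fun z => -(Real.exp (σ * z) + 1) * Real.exp (-Real.exp (σ * z)))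
      atTop (𝓝 0) := htail2.comp hlimT
  have hIic2 : IntegrableOn
      (fun z => σ * Real.exp (σ * z) * Real.exp (σ * z) * Real.exp (-Real.exp (σ * z)))
      (Iic (0:ℝ)) := by
    refine Integrable.mono ((aux_exp_Iic (by positivity : (0:ℝ) < 2 * σ)).const_mul σ)
      (Continuous.aestronglyMeasurable (by fun_prop)) (ae_of_all _ fun z => ?_)
    rw [Real.norm_eq_abs, Real.norm_eq_abs, abs_of_nonneg (by positivity),
      abs_of_nonneg (by positivity)]
    have he : Real.exp (σ * z) * Real.exp (σ * z) = Real.exp (2 * σ * z) := by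
      rw [← Real.exp_add]; ring_nf
    calc σ * Real.exp (σ * z) * Real.exp (σ * z) * Real.exp (-Real.exp (σ * z))
        ≤ σ * Real.exp (σ * z) * Real.exp (σ * z) * 1 := by
          gcongr
          exact Real.exp_le_one_iff.2 (neg_nonpos.2 (Real.exp_pos _).le)
      _ = σ * Real.exp (2 * σ * z) := by rw [mul_one, mul_assoc, he]
  have hI2 : ∫ z, σ * Real.exp (σ * z) * Real.exp (σ * z) * Real.exp (-Real.exp (σ * z)) = 1 := by
    have := aux_integral_real hd2 (fun z => by positivity) hIic2 hbot2 htop2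
    rw [this]; norm_num
  -- pdf cancellation identities
  have hpdf1 : ∀ z, gaussianPDFReal 0 1 z * φ z
      = σ * Real.exp (σ * z) * Real.exp (-Real.exp (σ * z)) := by
    intro z
    rw [gaussianPDFReal]
    simp only [hφdef, NNReal.coe_one, mul_one, sub_zero]
    have he : Real.exp (-z ^ 2 / 2) * Real.exp (z ^ 2 / 2) = 1 := by
      rw [← Real.exp_add, show -z ^ 2 / 2 + z ^ 2 / 2 = 0 by ring, Real.exp_zero]
    calc (Real.sqrt (2 * Real.pi))⁻¹ * Real.exp (-z ^ 2 / 2)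
          * (Real.sqrt (2 * Real.pi) * σ * Real.exp (σ * z) * Real.exp (z ^ 2 / 2)
            * Real.exp (-Real.exp (σ * z)))
        = ((Real.sqrt (2 * Real.pi))⁻¹ * Real.sqrt (2 * Real.pi))
          * (Real.exp (-z ^ 2 / 2) * Real.exp (z ^ 2 / 2))
          * (σ * Real.exp (σ * z) * Real.exp (-Real.exp (σ * z))) := by ring
      _ = σ * Real.exp (σ * z) * Real.exp (-Real.exp (σ * z)) := by
          rw [inv_mul_cancel₀ sqrtpos.ne', he, one_mul, one_mul]
  have hpdf2 : ∀ z, gaussianPDFReal 0 1 z * (φ z * Real.exp (σ * z))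
      = σ * Real.exp (σ * z) * Real.exp (σ * z) * Real.exp (-Real.exp (σ * z)) := by
    intro z
    rw [← mul_assoc, hpdf1 z]
    ring
  -- part 1
  refine ⟨ae_of_all _ fun ω => by rw [hG]; exact hφpos _, ?_, ?_⟩
  -- part 2
  · have e1 : ∫ ω, g (Real.exp (σ * Z ω)) ∂P = ∫ ω, φ (Z ω) ∂P := by
      congr 1; funext ω; exact hG (Z ω)
    rw [e1, ← integral_map hZ.aemeasurable hφc.aestronglyMeasurable, hZlaw,
      aux_gaussian_integral]
    calc ∫ z, gaussianPDFReal 0 1 z * φ z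
        = ∫ z, σ * Real.exp (σ * z) * Real.exp (-Real.exp (σ * z)) := by
          congr 1; funext z; exact hpdf1 z
      _ = 1 := hI1
  -- part 3
  · intro α hα
    have hmeq : (fun ω => ENNReal.ofReal (g (Real.exp (σ * Z ω))))
        = fun ω => (((φ (Z ω)).toNNReal : NNReal) : ENNReal) := by
      funext ω; rw [hG]; rfl
    rw [hmeq, integral_withDensity_eq_integral_smul
      (f := fun ω => (φ (Z ω)).toNNReal)
      (((hφc.measurable.comp hZ).real_toNNReal : Measurable fun ω => (φ (Z ω)).toNNReal))]
    have e2 : ∀ ω : Ω, ((φ (Z ω)).toNNReal : NNReal)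
          • Real.exp (σ * Z ω + σ / α * B ω - σ ^ 2 / (2 * α ^ 2))
        = (φ (Z ω) * Real.exp (σ * Z ω)) * Real.exp (σ / α * B ω)
          * Real.exp (-(σ ^ 2 / (2 * α ^ 2))) := by
      intro ω
      rw [NNReal.smul_def, Real.coe_toNNReal _ (hφpos _).le, smul_eq_mul, sub_eq_add_neg,
        Real.exp_add, Real.exp_add]
      ring
    simp only [e2]
    rw [integral_mul_const]
    have hφ2m : Measurable (fun z => φ z * Real.exp (σ * z)) := by fun_prop
    have hψm : Measurable (fun b : ℝ => Real.exp (σ / α * b)) := by fun_prop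
    have hind2 : IndepFun (fun ω => φ (Z ω) * Real.exp (σ * Z ω))
        (fun ω => Real.exp (σ / α * B ω)) P := hindep.comp hφ2m hψm
    have hsplit := hind2.integral_mul_eq_mul_integral
      ((hφ2m.comp hZ).aestronglyMeasurable) ((hψm.comp hB).aestronglyMeasurable)
    rw [show (∫ ω, φ (Z ω) * Real.exp (σ * Z ω) * Real.exp (σ / α * B ω) ∂P)
        = integral P ((fun ω => φ (Z ω) * Real.exp (σ * Z ω))
          * fun ω => Real.exp (σ / α * B ω)) from rfl, hsplit]
    have IX : ∫ ω, φ (Z ω) * Real.exp (σ * Z ω) ∂P = 1 := by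
      have emap : ∫ ω, φ (Z ω) * Real.exp (σ * Z ω) ∂P
          = ∫ z, φ z * Real.exp (σ * z) ∂(P.map Z) :=
        (integral_map hZ.aemeasurable hφ2m.aestronglyMeasurable).symm
      rw [emap, hZlaw, aux_gaussian_integral]
      calc ∫ z, gaussianPDFReal 0 1 z * (φ z * Real.exp (σ * z))
          = ∫ z, σ * Real.exp (σ * z) * Real.exp (σ * z) * Real.exp (-Real.exp (σ * z)) := by
            congr 1; funext z; exact hpdf2 z
        _ = 1 := hI2
    have IY : ∫ ω, Real.exp (σ / α * B ω) ∂P = Real.exp ((σ / α) ^ 2 / 2) := by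
      rw [← integral_map hB.aemeasurable hψm.aestronglyMeasurable, hBlaw,
        aux_gaussian_integral]
      have hpt : ∀ b, gaussianPDFReal 0 1 b * Real.exp (σ / α * b)
          = Real.exp ((σ / α) ^ 2 / 2)
            * ((Real.sqrt (2 * Real.pi))⁻¹ * Real.exp (-(b - σ / α) ^ 2 / 2)) := by
        intro b
        rw [gaussianPDFReal]
        simp only [NNReal.coe_one, mul_one, sub_zero]
        rw [mul_assoc, ← Real.exp_add,
          show Real.exp ((σ / α) ^ 2 / 2) * ((Real.sqrt (2 * Real.pi))⁻¹
              * Real.exp (-(b - σ / α) ^ 2 / 2))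
            = (Real.sqrt (2 * Real.pi))⁻¹
              * Real.exp ((σ / α) ^ 2 / 2 + -(b - σ / α) ^ 2 / 2) from by
            rw [Real.exp_add]; ring]
        congr 1
        ring
      calc ∫ b, gaussianPDFReal 0 1 b * Real.exp (σ / α * b)
          = ∫ b, Real.exp ((σ / α) ^ 2 / 2)
              * ((Real.sqrt (2 * Real.pi))⁻¹ * Real.exp (-(b - σ / α) ^ 2 / 2)) := by
            congr 1; funext b; exact hpt b
        _ = Real.exp ((σ / α) ^ 2 / 2)
              * ((Real.sqrt (2 * Real.pi))⁻¹ * ∫ b, Real.exp (-(b - σ / α) ^ 2 / 2)) := by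
            rw [integral_const_mul, integral_const_mul]
        _ = Real.exp ((σ / α) ^ 2 / 2) := by
            rw [integral_sub_right_eq_self (fun b => Real.exp (-b ^ 2 / 2)) (σ / α)]
            have hg2 : ∫ b : ℝ, Real.exp (-b ^ 2 / 2) = Real.sqrt (2 * Real.pi) := by
              have := integral_gaussian (1/2 : ℝ)
              simp only [show ∀ x : ℝ, -(1/2) * x ^ 2 = -x ^ 2 / 2 from fun x => by ring] at this
              rw [this]
              congr 1
              ring
            rw [hg2, inv_mul_cancel₀ sqrtpos.ne', mul_one]
    rw [IX, IY, one_mul, ← Real.exp_add,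
      show (σ / α) ^ 2 / 2 + -(σ ^ 2 / (2 * α ^ 2)) = 0 from by field_simp [hα.ne']; ring,
      Real.exp_zero]
end

section
/- Let $\sigma>0$ and let $Z$ and $B$ be independent standard Gaussian random variables on a probability space $(\Omega,\mathcal{F},P)$. Let $h(x)=\frac{1}{\sqrt{2\pi}\,\sigma x}\exp\left(-\frac{(\ln x)^2}{2\sigma^2}\right)$ for $x>0$, $g(x)=e^{-x}/h(x)$, and let $\tilde P$ be the probability measure with $d\tilde P = g(e^{\sigma Z})\,dP$. For each $\alpha>0$ let $Q^{\alpha,1}$ and $\tilde Q^{\alpha,1}$ denote the laws on $\mathbb{R}$ of $\alpha Z+B$ under $P$ and under $\tilde P$, respectively. Then for every family of Borel sets $(A_\alpha)_{\alpha>0}$ of $\mathbb{R}$, $Q^{\alpha,1}(A_\alpha)\to 0$ as $\alpha\to\infty$ if and only if $\tilde Q^{\alpha,1}(A_\alpha)\to 0$ as $\alpha\to\infty$; i.e., the families $(\tilde Q^{\alpha,1})_{\alpha>0}$ and $(Q^{\alpha,1})_{\alpha>0}$ are mutually contiguous. -/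
open MeasureTheory ProbabilityTheory Real Filter
open scoped ENNReal NNReal

lemma aux_sub_exp_le_neg_abs (t : ℝ) : t - Real.exp t ≤ -|t| := by
  rcases le_or_gt 0 t with ht | ht
  · rw [abs_of_nonneg ht]
    have h2 : Real.exp (t/2) * Real.exp (t/2) = Real.exp t := by
      rw [← Real.exp_add]; ring_nf
    nlinarith [Real.add_one_le_exp (t/2), sq_nonneg (1 - t/2), Real.exp_pos (t/2)]
  · rw [abs_of_neg ht]
    have := Real.exp_pos t
    linarith

lemma aux_tendsto {Ω : Type*} [MeasurableSpace Ω] {μ ν : Measure Ω}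
    (key : ∀ ε : ℝ≥0∞, 0 < ε → ε ≠ ∞ →
      ∃ C : ℝ≥0∞, C ≠ ∞ ∧ ∀ S : Set Ω, MeasurableSet S → ν S ≤ C * μ S + ε)
    {s : ℝ → Set Ω} (hs : ∀ α, MeasurableSet (s α))
    (hμ : Tendsto (fun α => μ (s α)) atTop (nhds 0)) :
    Tendsto (fun α => ν (s α)) atTop (nhds 0) := by
  rw [ENNReal.tendsto_nhds_zero]
  intro ε hε
  set ε' : ℝ≥0∞ := min ε 1 with hε'def
  have hε'0 : ε' ≠ 0 := by
    rw [hε'def]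
    exact (lt_min hε one_pos).ne'
  have hε'top : ε' ≠ ∞ := by simp [hε'def]
  have h20 : (2:ℝ≥0∞) ≠ 0 := by norm_num
  have h2top : (2:ℝ≥0∞) ≠ ∞ := by norm_num
  obtain ⟨C, hC, hkey⟩ := key (ε'/2) (ENNReal.div_pos hε'0 h2top) (by
    exact (ENNReal.div_lt_top hε'top h20).ne)
  have hCtop : C + 1 ≠ ∞ := by simp [hC]
  have hδ : 0 < ε'/2/(C+1) := ENNReal.div_pos (ENNReal.div_pos hε'0 h2top).ne' hCtop
  filter_upwards [ENNReal.tendsto_nhds_zero.mp hμ _ hδ] with α hα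
  calc ν (s α) ≤ C * μ (s α) + ε'/2 := hkey _ (hs α)
    _ ≤ (C+1) * (ε'/2/(C+1)) + ε'/2 := by gcongr; exact le_self_add
    _ = ε'/2 + ε'/2 := by rw [ENNReal.mul_div_cancel (by simp) hCtop]
    _ = ε' := ENNReal.add_halves ε'
    _ ≤ ε := min_le_left _ _

lemma aux_key1 {Ω : Type*} [MeasurableSpace Ω] (P : Measure Ω) (w : Ω → ℝ≥0∞)
    (hw : Measurable w) (hfin : ∀ ω, w ω ≠ ∞) [IsFiniteMeasure (P.withDensity w)] :
    ∀ ε : ℝ≥0∞, 0 < ε → ε ≠ ∞ →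
      ∃ C : ℝ≥0∞, C ≠ ∞ ∧ ∀ S : Set Ω, MeasurableSet S →
        P.withDensity w S ≤ C * P S + ε := by
  intro ε hε _
  set ν := P.withDensity w with hν
  have hT : ∀ n : ℕ, MeasurableSet {ω | (n : ℝ≥0∞) < w ω} := fun n =>
    hw measurableSet_Ioi
  have hanti : Antitone (fun n : ℕ => {ω | (n : ℝ≥0∞) < w ω}) := by
    intro n m hnm ω hω
    exact lt_of_le_of_lt (Nat.cast_le (α := ℝ≥0∞) |>.mpr hnm) hω
  have hiInter : ⋂ n : ℕ, {ω | (n : ℝ≥0∞) < w ω} = ∅ := by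
    ext ω
    simp only [Set.mem_iInter, Set.mem_setOf_eq, Set.mem_empty_iff_false, iff_false, not_forall,
      not_lt]
    obtain ⟨n, hn⟩ := ENNReal.exists_nat_gt (hfin ω)
    exact ⟨n, hn.le⟩
  have htend : Tendsto (fun n : ℕ => ν {ω | (n : ℝ≥0∞) < w ω}) atTop (nhds 0) := by
    have h := tendsto_measure_iInter_atTop (μ := ν)
      (fun n => (hT n).nullMeasurableSet) hanti ⟨0, measure_ne_top _ _⟩
    rw [hiInter, measure_empty] at h
    exact h
  obtain ⟨n, hn⟩ := (ENNReal.tendsto_nhds_zero.mp htend ε hε).exists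
  refine ⟨n, ENNReal.natCast_ne_top n, fun S hS => ?_⟩
  have hpt : ∀ ω, w ω ≤ (n : ℝ≥0∞) + Set.indicator {ω | (n : ℝ≥0∞) < w ω} w ω := by
    intro ω
    rcases le_or_gt (w ω) (n : ℝ≥0∞) with h | h
    · exact h.trans le_self_add
    · have heq : Set.indicator {ω | (n : ℝ≥0∞) < w ω} w ω = w ω := Set.indicator_of_mem (show ω ∈ {ω | (n : ℝ≥0∞) < w ω} from h) w
      rw [heq]
      exact le_add_self
  calc ν S = ∫⁻ ω in S, w ω ∂P := withDensity_apply w hS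
    _ ≤ ∫⁻ ω in S, ((n : ℝ≥0∞) + Set.indicator {ω | (n : ℝ≥0∞) < w ω} w ω) ∂P :=
        lintegral_mono hpt
    _ = (n : ℝ≥0∞) * P S + ∫⁻ ω in S, Set.indicator {ω | (n : ℝ≥0∞) < w ω} w ω ∂P := by
        rw [lintegral_add_left measurable_const, setLIntegral_const]
    _ ≤ (n : ℝ≥0∞) * P S + ∫⁻ ω, Set.indicator {ω | (n : ℝ≥0∞) < w ω} w ω ∂P := by
        gcongr
        exact Measure.restrict_le_self
    _ = (n : ℝ≥0∞) * P S + ν {ω | (n : ℝ≥0∞) < w ω} := by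
        rw [lintegral_indicator (hT n), ← withDensity_apply w (hT n)]
    _ ≤ (n : ℝ≥0∞) * P S + ε := by gcongr

lemma aux_key2 {Ω : Type*} [MeasurableSpace Ω] (P : Measure Ω) [IsFiniteMeasure P]
    (w : Ω → ℝ≥0∞) (hw : Measurable w) (hpos : ∀ ω, w ω ≠ 0) :
    ∀ ε : ℝ≥0∞, 0 < ε → ε ≠ ∞ →
      ∃ C : ℝ≥0∞, C ≠ ∞ ∧ ∀ S : Set Ω, MeasurableSet S →
        P S ≤ C * P.withDensity w S + ε := by
  intro ε hε _
  have hU : ∀ n : ℕ, MeasurableSet {ω | w ω < ((n : ℝ≥0∞))⁻¹} := fun n =>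
    hw measurableSet_Iio
  have hanti : Antitone (fun n : ℕ => {ω | w ω < ((n : ℝ≥0∞))⁻¹}) := by
    intro n m hnm ω hω
    have hle : ((m : ℝ≥0∞))⁻¹ ≤ ((n : ℝ≥0∞))⁻¹ :=
      ENNReal.inv_le_inv.mpr (Nat.mono_cast hnm)
    exact lt_of_lt_of_le hω hle
  have hiInter : ⋂ n : ℕ, {ω | w ω < ((n : ℝ≥0∞))⁻¹} = ∅ := by
    ext ω
    simp only [Set.mem_iInter, Set.mem_setOf_eq, Set.mem_empty_iff_false, iff_false, not_forall,
      not_lt]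
    obtain ⟨n, hn⟩ := ENNReal.exists_inv_nat_lt (hpos ω)
    exact ⟨n, hn.le⟩
  have htend : Tendsto (fun n : ℕ => P {ω | w ω < ((n : ℝ≥0∞))⁻¹}) atTop (nhds 0) := by
    have h := tendsto_measure_iInter_atTop (μ := P)
      (fun n => (hU n).nullMeasurableSet) hanti ⟨0, measure_ne_top _ _⟩
    rw [hiInter, measure_empty] at h
    exact h
  obtain ⟨n, hn, hn1⟩ :=
    ((ENNReal.tendsto_nhds_zero.mp htend ε hε).and (eventually_ge_atTop 1)).exists
  have hn0 : (n : ℝ≥0∞) ≠ 0 := by exact_mod_cast Nat.one_le_iff_ne_zero.mp hn1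
  refine ⟨n, ENNReal.natCast_ne_top n, fun S hS => ?_⟩
  have hpt : ∀ ω : Ω, (1 : ℝ≥0∞) ≤ (n : ℝ≥0∞) * w ω
      + Set.indicator {ω | w ω < ((n : ℝ≥0∞))⁻¹} (fun _ => 1) ω := by
    intro ω
    rcases lt_or_ge (w ω) ((n : ℝ≥0∞))⁻¹ with h | h
    · have heq : Set.indicator {ω | w ω < ((n : ℝ≥0∞))⁻¹} (fun _ => (1 : ℝ≥0∞)) ω = 1 :=
        Set.indicator_of_mem (show ω ∈ {ω | w ω < ((n : ℝ≥0∞))⁻¹} from h) _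
      rw [heq]
      exact le_add_self
    · refine le_trans ?_ le_self_add
      rw [← ENNReal.mul_inv_cancel hn0 (ENNReal.natCast_ne_top n)]
      gcongr
  calc P S = ∫⁻ _ in S, 1 ∂P := (setLIntegral_one S).symm
    _ ≤ ∫⁻ ω in S, ((n : ℝ≥0∞) * w ω
        + Set.indicator {ω | w ω < ((n : ℝ≥0∞))⁻¹} (fun _ => 1) ω) ∂P :=
        lintegral_mono fun ω => hpt ω
    _ = (n : ℝ≥0∞) * ∫⁻ ω in S, w ω ∂P
        + ∫⁻ ω in S, Set.indicator {ω | w ω < ((n : ℝ≥0∞))⁻¹} (fun _ => 1) ω ∂P := by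
        rw [lintegral_add_left (hw.const_mul _), lintegral_const_mul _ hw]
    _ ≤ (n : ℝ≥0∞) * P.withDensity w S
        + ∫⁻ ω, Set.indicator {ω | w ω < ((n : ℝ≥0∞))⁻¹} (fun _ => 1) ω ∂P := by
        rw [withDensity_apply w hS]
        gcongr
        exact Measure.restrict_le_self
    _ ≤ (n : ℝ≥0∞) * P.withDensity w S + ε := by
        gcongr
        rw [lintegral_indicator (hU n), setLIntegral_one]
        exact hn

lemma aux_g_eq (σ : ℝ) (hσ : 0 < σ) (h g : ℝ → ℝ)
    (hh : ∀ x, 0 < x →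
      h x = (Real.sqrt (2 * Real.pi) * σ * x)⁻¹ * Real.exp (-(Real.log x) ^ 2 / (2 * σ ^ 2)))
    (hg : ∀ x, 0 < x → g x = Real.exp (-x) / h x) (z : ℝ) :
    g (Real.exp (σ * z)) =
      Real.sqrt (2 * Real.pi) * σ * Real.exp (σ * z + z ^ 2 / 2 - Real.exp (σ * z)) := by
  have hx : 0 < Real.exp (σ * z) := Real.exp_pos _
  rw [hg _ hx, hh _ hx, Real.log_exp]
  have hσ' : σ ≠ 0 := hσ.ne'
  have h1 : -(σ * z) ^ 2 / (2 * σ ^ 2) = -(z ^ 2 / 2) := by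
    field_simp
  rw [h1]
  have hsq : Real.sqrt (2 * Real.pi) ≠ 0 := by positivity
  have hne : (Real.sqrt (2 * Real.pi) * σ * Real.exp (σ * z))⁻¹ * Real.exp (-(z ^ 2 / 2)) ≠ 0 := by
    positivity
  rw [div_eq_iff hne]
  rw [mul_inv]
  rw [mul_inv]
  have hcalc : Real.sqrt (2 * Real.pi) * σ * Real.exp (σ * z + z ^ 2 / 2 - Real.exp (σ * z)) *
      ((Real.sqrt (2 * Real.pi))⁻¹ * σ⁻¹ * (Real.exp (σ * z))⁻¹ * Real.exp (-(z ^ 2 / 2)))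
      = (Real.sqrt (2 * Real.pi) * (Real.sqrt (2 * Real.pi))⁻¹) * (σ * σ⁻¹) *
        (Real.exp (σ * z + z ^ 2 / 2 - Real.exp (σ * z)) * (Real.exp (σ * z))⁻¹ *
          Real.exp (-(z ^ 2 / 2))) := by ring
  rw [hcalc, mul_inv_cancel₀ hsq, mul_inv_cancel₀ hσ', ← Real.exp_neg, ← Real.exp_add,
    ← Real.exp_add]
  norm_num
  ring

lemma aux_F_meas (σ : ℝ) : Measurable fun z : ℝ =>
    ENNReal.ofReal (Real.sqrt (2 * Real.pi) * σ *
      Real.exp (σ * z + z ^ 2 / 2 - Real.exp (σ * z))) := by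
  fun_prop

lemma aux_finite (σ : ℝ) (hσ : 0 < σ) :
    ∫⁻ z, ENNReal.ofReal (Real.sqrt (2 * Real.pi) * σ *
        Real.exp (σ * z + z ^ 2 / 2 - Real.exp (σ * z))) ∂(gaussianReal 0 1) ≠ ∞ := by
  rw [gaussianReal_of_var_ne_zero _ one_ne_zero,
    lintegral_withDensity_eq_lintegral_mul _ (measurable_gaussianPDF 0 1) (aux_F_meas σ)]
  have hbd : ∀ z : ℝ,
      (gaussianPDF 0 1 * fun z => ENNReal.ofReal (Real.sqrt (2 * Real.pi) * σ *
        Real.exp (σ * z + z ^ 2 / 2 - Real.exp (σ * z)))) z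
        ≤ ENNReal.ofReal (σ * Real.exp (-(σ * |z|))) := by
    intro z
    have hpdfnn : 0 ≤ gaussianPDFReal 0 1 z := gaussianPDFReal_nonneg 0 1 z
    have hsq : Real.sqrt (2 * Real.pi) ≠ 0 := by positivity
    have hpdf : gaussianPDFReal 0 1 z = (Real.sqrt (2 * Real.pi))⁻¹ * Real.exp (-(z ^ 2 / 2)) := by
      rw [gaussianPDFReal]
      norm_num
      exact Or.inl (by ring)
    have hprod : gaussianPDFReal 0 1 z * (Real.sqrt (2 * Real.pi) * σ *
        Real.exp (σ * z + z ^ 2 / 2 - Real.exp (σ * z)))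
        = σ * Real.exp (σ * z - Real.exp (σ * z)) := by
      rw [hpdf]
      have hcalc : (Real.sqrt (2 * Real.pi))⁻¹ * Real.exp (-(z ^ 2 / 2)) *
          (Real.sqrt (2 * Real.pi) * σ * Real.exp (σ * z + z ^ 2 / 2 - Real.exp (σ * z)))
          = σ * ((Real.sqrt (2 * Real.pi))⁻¹ * Real.sqrt (2 * Real.pi)) *
            (Real.exp (-(z ^ 2 / 2)) * Real.exp (σ * z + z ^ 2 / 2 - Real.exp (σ * z))) := by
        ring
      rw [hcalc, inv_mul_cancel₀ hsq, ← Real.exp_add,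
        show -(z ^ 2 / 2) + (σ * z + z ^ 2 / 2 - Real.exp (σ * z))
          = σ * z - Real.exp (σ * z) by ring]
      ring
    have hle : σ * Real.exp (σ * z - Real.exp (σ * z)) ≤ σ * Real.exp (-(σ * |z|)) := by
      have habs : |σ * z| = σ * |z| := by rw [abs_mul, abs_of_pos hσ]
      have := aux_sub_exp_le_neg_abs (σ * z)
      rw [habs] at this
      exact mul_le_mul_of_nonneg_left (Real.exp_le_exp.mpr this) hσ.le
    calc (gaussianPDF 0 1 * fun z => ENNReal.ofReal (Real.sqrt (2 * Real.pi) * σ *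
        Real.exp (σ * z + z ^ 2 / 2 - Real.exp (σ * z)))) z
        = ENNReal.ofReal (gaussianPDFReal 0 1 z * (Real.sqrt (2 * Real.pi) * σ *
            Real.exp (σ * z + z ^ 2 / 2 - Real.exp (σ * z)))) := by
          simp only [Pi.mul_apply, gaussianPDF]
          rw [ENNReal.ofReal_mul hpdfnn]
      _ ≤ ENNReal.ofReal (σ * Real.exp (-(σ * |z|))) := by
          rw [hprod]
          exact ENNReal.ofReal_le_ofReal hle
  refine ne_of_lt (lt_of_le_of_lt (lintegral_mono hbd) ?_)
  rw [← setLIntegral_univ, ← Set.Iic_union_Ioi (a := (0 : ℝ)),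
    lintegral_union measurableSet_Ioi (Set.Iic_disjoint_Ioi le_rfl)]
  have hIic : IntegrableOn (fun z : ℝ => σ * Real.exp (σ * z)) (Set.Iic (0 : ℝ)) := by
    have hind : Integrable (fun z : ℝ => Set.indicator (Set.Iic (0 : ℝ)) Real.exp (σ * z)) :=
      (integrable_comp_mul_left_iff _ hσ.ne').mpr
        ((integrable_indicator_iff measurableSet_Iic).mpr (integrableOn_exp_Iic 0))
    have heq : (fun z : ℝ => Set.indicator (Set.Iic (0 : ℝ)) Real.exp (σ * z))
        = Set.indicator (Set.Iic (0 : ℝ)) (fun z => Real.exp (σ * z)) := by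
      funext z
      rcases le_or_gt z 0 with hz | hz
      · rw [Set.indicator_of_mem (Set.mem_Iic.mpr (mul_nonpos_of_nonneg_of_nonpos hσ.le hz)),
          Set.indicator_of_mem (Set.mem_Iic.mpr hz)]
      · rw [Set.indicator_of_notMem (by simpa using (mul_pos hσ hz).not_ge),
          Set.indicator_of_notMem (by simpa using hz.not_ge)]
    rw [heq] at hind
    exact ((integrable_indicator_iff measurableSet_Iic).mp hind).const_mul σ
  have hIoi : IntegrableOn (fun z : ℝ => σ * Real.exp (-σ * z)) (Set.Ioi (0 : ℝ)) :=
    (exp_neg_integrableOn_Ioi 0 hσ).const_mul σ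
  have h1 : ∫⁻ z in Set.Iic (0 : ℝ), ENNReal.ofReal (σ * Real.exp (-(σ * |z|))) < ∞ := by
    have hcong : ∫⁻ z in Set.Iic (0 : ℝ), ENNReal.ofReal (σ * Real.exp (-(σ * |z|)))
        = ∫⁻ z in Set.Iic (0 : ℝ), ENNReal.ofReal (σ * Real.exp (σ * z)) := by
      refine setLIntegral_congr_fun measurableSet_Iic (fun z hz => ?_)
      rw [abs_of_nonpos (Set.mem_Iic.mp hz)]
      ring_nf
    rw [hcong]
    exact hIic.lintegral_lt_top
  have h2 : ∫⁻ z in Set.Ioi (0 : ℝ), ENNReal.ofReal (σ * Real.exp (-(σ * |z|))) < ∞ := by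
    have hcong : ∫⁻ z in Set.Ioi (0 : ℝ), ENNReal.ofReal (σ * Real.exp (-(σ * |z|)))
        = ∫⁻ z in Set.Ioi (0 : ℝ), ENNReal.ofReal (σ * Real.exp (-σ * z)) := by
      refine setLIntegral_congr_fun measurableSet_Ioi (fun z hz => ?_)
      rw [abs_of_pos (Set.mem_Ioi.mp hz)]
      ring_nf
    rw [hcong]
    exact hIoi.lintegral_lt_top
  exact ENNReal.add_lt_top.mpr ⟨h1, h2⟩

lemma aux_toReal_iff {f : ℝ → ℝ≥0∞} (hf : ∀ i, f i ≠ ∞) :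
    Tendsto (fun i => (f i).toReal) atTop (nhds 0) ↔ Tendsto f atTop (nhds 0) := by
  have := ENNReal.tendsto_toReal_iff (fi := atTop) hf (x := 0) ENNReal.zero_ne_top
  simpa using this

/-- the laws of `αZ + B` under `P` and under `P̃` (where
`d P̃ = g(e^{σZ}) dP`) are mutually contiguous as `α → ∞`: for every family of Borel
sets `(A_α)`, `Q^{α,1}(A_α) → 0` iff `Q̃^{α,1}(A_α) → 0`. -/
theorem statement16 {Ω : Type*} [MeasurableSpace Ω] (P : Measure Ω) [IsProbabilityMeasure P]
    (σ : ℝ) (hσ : 0 < σ) (Z B : Ω → ℝ) (hZ : Measurable Z) (hB : Measurable B)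
    (hindep : IndepFun Z B P)
    (hZlaw : P.map Z = gaussianReal 0 1) (hBlaw : P.map B = gaussianReal 0 1)
    (h g : ℝ → ℝ)
    (hh : ∀ x, 0 < x →
      h x = (Real.sqrt (2 * Real.pi) * σ * x)⁻¹ * Real.exp (-(Real.log x) ^ 2 / (2 * σ ^ 2)))
    (hg : ∀ x, 0 < x → g x = Real.exp (-x) / h x) :
    ∀ A : ℝ → Set ℝ, (∀ α, MeasurableSet (A α)) →
      (Filter.Tendsto (fun α : ℝ =>
          ((P.map fun ω => α * Z ω + B ω) (A α)).toReal) Filter.atTop (nhds 0)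
        ↔ Filter.Tendsto (fun α : ℝ =>
          (((P.withDensity fun ω => ENNReal.ofReal (g (Real.exp (σ * Z ω)))).map
              fun ω => α * Z ω + B ω) (A α)).toReal) Filter.atTop (nhds 0)) := by
  intro A hA
  set F : ℝ → ℝ := fun z => Real.sqrt (2 * Real.pi) * σ *
    Real.exp (σ * z + z ^ 2 / 2 - Real.exp (σ * z)) with hF
  set w : Ω → ℝ≥0∞ := fun ω => ENNReal.ofReal (g (Real.exp (σ * Z ω))) with hwdef
  have hgF : ∀ ω, w ω = ENNReal.ofReal (F (Z ω)) := fun ω => by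
    rw [hwdef, hF]
    simp only
    rw [aux_g_eq σ hσ h g hh hg (Z ω)]
  have hFmeas : Measurable fun z : ℝ => ENNReal.ofReal (F z) := aux_F_meas σ
  have hwmeas : Measurable w := by
    have : w = (fun z => ENNReal.ofReal (F z)) ∘ Z := funext hgF
    rw [this]
    exact hFmeas.comp hZ
  have hfin_ne : ∀ ω, w ω ≠ ∞ := fun ω => by rw [hgF ω]; exact ENNReal.ofReal_ne_top
  have hpos : ∀ ω, w ω ≠ 0 := fun ω => by
    rw [hgF ω, hF]
    refine (ENNReal.ofReal_pos.mpr ?_).ne'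
    have := Real.sqrt_pos.mpr (by positivity : (0:ℝ) < 2 * Real.pi)
    positivity
  have hν : IsFiniteMeasure (P.withDensity w) := by
    constructor
    rw [withDensity_apply _ MeasurableSet.univ, Measure.restrict_univ]
    have heq : ∫⁻ ω, w ω ∂P = ∫⁻ z, ENNReal.ofReal (F z) ∂(P.map Z) := by
      rw [lintegral_map hFmeas hZ]
      exact lintegral_congr fun ω => hgF ω
    rw [heq, hZlaw]
    exact (aux_finite σ hσ).lt_top
  have hmeasT : ∀ α : ℝ, Measurable fun ω => α * Z ω + B ω :=
    fun α => (hZ.const_mul α).add hB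
  have hsα : ∀ α : ℝ, MeasurableSet ((fun ω => α * Z ω + B ω) ⁻¹' A α) :=
    fun α => (hmeasT α) (hA α)
  have hm1 : ∀ α : ℝ, (P.map fun ω => α * Z ω + B ω) (A α)
      = P ((fun ω => α * Z ω + B ω) ⁻¹' A α) :=
    fun α => Measure.map_apply (hmeasT α) (hA α)
  have hm2 : ∀ α : ℝ, ((P.withDensity w).map fun ω => α * Z ω + B ω) (A α)
      = (P.withDensity w) ((fun ω => α * Z ω + B ω) ⁻¹' A α) :=
    fun α => Measure.map_apply (hmeasT α) (hA α)
  simp only [hm1, hm2]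
  rw [aux_toReal_iff (fun α => measure_ne_top _ _),
    aux_toReal_iff (fun α => measure_ne_top _ _)]
  constructor
  · exact fun hQ => aux_tendsto (aux_key1 P w hwmeas hfin_ne) hsα hQ
  · exact fun hQ => aux_tendsto (aux_key2 P w hwmeas hpos) hsα hQ
end
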